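/- For any integer d ≥ 3 and any real p ≥ 0, there exists a constant C < 2 (depending only on d and p) such that for all (x_1,…,x_d) ∈ Δ_d, Σ_{i=1}^{d−2} [ 1/((x_{i+2} − x_{i+1})(x_{i+1} − x_i)^{p+1}) + 1/((x_{i+2} − x_{i+1})^{p+1} (x_{i+1} − x_i)) ] ≤ C · Σ_{i=1}^{d−1} 1/(x_{i+1} − x_i)^{p+2}. -/

import Mathlib

open Finset

/-- Weighted Young/AM-GM bound: for `c > 0` the cross terms `w v^{p+1} + w^{p+1} v`
are controlled by `c v^{p+2}` plus a `c`-dependent multiple of `w^{p+2}`. -/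
lemma young_pair_aux (p c v w : ℝ) (hp : 0 ≤ p) (hc : 0 < c) (hv : 0 < v) (hw : 0 < w) :
    w * v ^ (p + 1) + w ^ (p + 1) * v ≤
      c * v ^ (p + 2) +
        ((c ^ (-(p + 1)) + (p + 1) * c ^ (-(1 / (p + 1)))) / (p + 2)) * w ^ (p + 2) := by
  have hp1 : (0:ℝ) < p + 1 := by linarith
  have hp2 : (0:ℝ) < p + 2 := by linarith
  have hw₁ : (0:ℝ) ≤ (p + 1) / (p + 2) := by positivity
  have hw₂ : (0:ℝ) ≤ 1 / (p + 2) := by positivity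
  have hwsum : (p + 1) / (p + 2) + 1 / (p + 2) = 1 := by
    field_simp
    ring
  have h1 : (c * v ^ (p+2)) ^ ((p+1)/(p+2)) * (c ^ (-(p+1)) * w ^ (p+2)) ^ (1/(p+2))
      ≤ (p+1)/(p+2) * (c * v ^ (p+2)) + 1/(p+2) * (c ^ (-(p+1)) * w ^ (p+2)) :=
    Real.geom_mean_le_arith_mean2_weighted hw₁ hw₂ (by positivity) (by positivity) hwsum
  have h2 : (c * v ^ (p+2)) ^ (1/(p+2)) * (c ^ (-(1/(p+1))) * w ^ (p+2)) ^ ((p+1)/(p+2))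
      ≤ 1/(p+2) * (c * v ^ (p+2)) + (p+1)/(p+2) * (c ^ (-(1/(p+1))) * w ^ (p+2)) :=
    Real.geom_mean_le_arith_mean2_weighted hw₂ hw₁ (by positivity) (by positivity)
      (by linarith [hwsum])
  have e1 : (c * v ^ (p+2)) ^ ((p+1)/(p+2)) * (c ^ (-(p+1)) * w ^ (p+2)) ^ (1/(p+2))
      = w * v ^ (p+1) := by
    rw [Real.mul_rpow hc.le (by positivity), Real.mul_rpow (by positivity) (by positivity),
      ← Real.rpow_mul hv.le, ← Real.rpow_mul hw.le, ← Real.rpow_mul hc.le]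
    have t1 : (p+2) * ((p+1)/(p+2)) = p + 1 := by field_simp
    have t2 : (p+2) * (1/(p+2)) = 1 := by field_simp
    have t3 : -(p+1) * (1/(p+2)) = -((p+1)/(p+2)) := by ring
    rw [t1, t2, t3, Real.rpow_one]
    rw [show c ^ ((p+1)/(p+2)) * v ^ (p+1) * (c ^ (-((p+1)/(p+2))) * w)
        = c ^ ((p+1)/(p+2)) * c ^ (-((p+1)/(p+2))) * (v ^ (p+1) * w) by ring,
      ← Real.rpow_add hc, add_neg_cancel, Real.rpow_zero, one_mul]
    ring
  have e2 : (c * v ^ (p+2)) ^ (1/(p+2)) * (c ^ (-(1/(p+1))) * w ^ (p+2)) ^ ((p+1)/(p+2))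
      = w ^ (p+1) * v := by
    rw [Real.mul_rpow hc.le (by positivity), Real.mul_rpow (by positivity) (by positivity),
      ← Real.rpow_mul hv.le, ← Real.rpow_mul hw.le, ← Real.rpow_mul hc.le]
    have t1 : (p+2) * ((p+1)/(p+2)) = p + 1 := by field_simp
    have t2 : (p+2) * (1/(p+2)) = 1 := by field_simp
    have t3 : -(1/(p+1)) * ((p+1)/(p+2)) = -(1/(p+2)) := by
      field_simp
    rw [t1, t2, t3, Real.rpow_one]
    rw [show c ^ (1/(p+2)) * v * (c ^ (-(1/(p+2))) * w ^ (p+1))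
        = c ^ (1/(p+2)) * c ^ (-(1/(p+2))) * (v * w ^ (p+1)) by ring,
      ← Real.rpow_add hc, add_neg_cancel, Real.rpow_zero, one_mul]
    ring
  rw [e1] at h1
  rw [e2] at h2
  have efin : (p+1)/(p+2) * (c * v ^ (p+2)) + 1/(p+2) * (c ^ (-(p+1)) * w ^ (p+2))
      + (1/(p+2) * (c * v ^ (p+2)) + (p+1)/(p+2) * (c ^ (-(1/(p+1))) * w ^ (p+2)))
      = c * v ^ (p+2) +
        ((c ^ (-(p + 1)) + (p + 1) * c ^ (-(1 / (p + 1)))) / (p + 2)) * w ^ (p + 2) := by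
    field_simp
    ring
  linarith [add_le_add h1 h2, efin.le, efin.ge]

/-- Second-order Taylor-type bound on the coefficient function `φ`. -/
lemma phi_quad_aux (p x : ℝ) (hp : 0 ≤ p) (hx : 0 ≤ x) (hx1 : x ≤ 1) :
    ((1 + x) ^ (-(p + 1)) + (p + 1) * (1 + x) ^ (-(1 / (p + 1)))) / (p + 2)
      ≤ 1 - x + (((p + 1) ^ 2 + 1) / (p + 2)) * x ^ 2 := by
  have hp1 : (0:ℝ) < p + 1 := by linarith
  have hp2 : (0:ℝ) < p + 2 := by linarith
  have h1x : (0:ℝ) < 1 + x := by linarith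
  -- first bound
  have hB : 1 + (p+1) * x ≤ (1 + x) ^ (p + 1) :=
    one_add_mul_self_le_rpow_one_add (by linarith) (by linarith)
  have hpos : (0:ℝ) < 1 + (p+1)*x := by positivity
  have h1 : (1 + x) ^ (-(p + 1)) ≤ 1 - (p+1)*x + (p+1)^2 * x^2 := by
    rw [Real.rpow_neg h1x.le]
    have h1' : ((1+x) ^ (p+1))⁻¹ ≤ (1 + (p+1)*x)⁻¹ := by
      apply inv_anti₀ hpos hB
    refine h1'.trans ?_
    have hmul : (1 + (p+1)*x)⁻¹ * (1 + (p+1)*x) = 1 := inv_mul_cancel₀ hpos.ne'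
    nlinarith [mul_nonneg (mul_nonneg (mul_nonneg hp1.le hp1.le) hp1.le)
      (mul_nonneg (mul_nonneg hx hx) hx), inv_pos.mpr hpos]
  -- second bound
  have hden : (0:ℝ) < (p+1)*(1+x) := by positivity
  have ht1 : x / ((p+1)*(1+x)) ≤ 1 := by
    rw [div_le_one hden]
    nlinarith
  have ht0 : 0 ≤ x / ((p+1)*(1+x)) := by positivity
  have hBt : (1 + x)⁻¹ ≤ (1 - x / ((p+1)*(1+x))) ^ (p + 1) := by
    have hber := one_add_mul_self_le_rpow_one_add
      (s := -(x / ((p+1)*(1+x)))) (by linarith) (p := p+1) (by linarith)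
    have e : 1 + (p+1) * -(x / ((p+1)*(1+x))) = (1+x)⁻¹ := by
      rw [inv_eq_one_div, eq_div_iff h1x.ne']
      field_simp
      ring
    rw [e] at hber
    rwa [show 1 + -(x / ((p+1)*(1+x))) = 1 - x / ((p+1)*(1+x)) by ring] at hber
  have h2 : (1 + x) ^ (-(1 / (p + 1))) ≤ 1 - x/(p+1) + x^2/(p+1) := by
    have hstep : (1 + x) ^ (-(1 / (p + 1))) ≤ 1 - x / ((p+1)*(1+x)) := by
      have e0 : (1 + x) ^ (-(1 / (p + 1))) = ((1+x)⁻¹) ^ (1 / (p+1)) := by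
        rw [← Real.rpow_neg_one (1+x), ← Real.rpow_mul h1x.le]
        norm_num
      rw [e0]
      have hm : ((1+x)⁻¹) ^ (1/(p+1))
          ≤ ((1 - x / ((p+1)*(1+x))) ^ (p+1)) ^ (1/(p+1)) :=
        Real.rpow_le_rpow (by positivity) hBt (by positivity)
      refine hm.trans_eq ?_
      rw [← Real.rpow_mul (by linarith), mul_one_div_cancel hp1.ne', Real.rpow_one]
    refine hstep.trans ?_
    have hkey : x/(p+1) - x^2/(p+1) ≤ x / ((p+1)*(1+x)) := by
      rw [le_div_iff₀ hden]
      have e3 : (x/(p+1) - x^2/(p+1)) * ((p+1)*(1+x)) = (x - x^2)*(1+x) := by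
        field_simp
      rw [e3]
      nlinarith [pow_nonneg hx 3]
    linarith
  have hsum : ((1 + x) ^ (-(p + 1)) + (p + 1) * (1 + x) ^ (-(1 / (p + 1)))) / (p + 2)
      ≤ ((1 - (p+1)*x + (p+1)^2*x^2) + (p+1)*(1 - x/(p+1) + x^2/(p+1)))/(p+2) := by
    gcongr
  refine hsum.trans_eq ?_
  field_simp
  ring

theorem exists_const_lt_two_nearest_neighbor
    (d : ℕ) (hd : 3 ≤ d) (p : ℝ) (hp : 0 ≤ p) :
    ∃ C : ℝ, C < 2 ∧
      ∀ x : ℕ → ℝ, (∀ i, i + 1 < d → x i < x (i + 1)) →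
        ∑ i ∈ Finset.range (d - 2),
            (1 / ((x (i + 2) - x (i + 1)) * (x (i + 1) - x i) ^ (p + 1))
              + 1 / ((x (i + 2) - x (i + 1)) ^ (p + 1) * (x (i + 1) - x i)))
          ≤ C * ∑ i ∈ Finset.range (d - 1), 1 / (x (i + 1) - x i) ^ (p + 2) := by
  have hp1 : (0:ℝ) < p + 1 := by linarith
  have hp2 : (0:ℝ) < p + 2 := by linarith
  obtain ⟨n, hn⟩ : ∃ n : ℕ, d - 2 = n := ⟨d - 2, rfl⟩
  have hn1 : 1 ≤ n := by omega
  have hd1 : d - 1 = n + 1 := by omega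
  have hcn : (1:ℝ) ≤ (n:ℝ) := by exact_mod_cast hn1
  obtain ⟨K, hK⟩ : ∃ K : ℝ, K = ((p+1)^2 + 1)/(p+2) := ⟨_, rfl⟩
  have hK1 : 1 ≤ K := by
    rw [hK, le_div_iff₀ hp2]
    nlinarith
  have hK0 : (0:ℝ) < K := lt_of_lt_of_le one_pos hK1
  obtain ⟨δ, hδ0, hδ3, hnδ3, hquad⟩ :
      ∃ δ : ℝ, 0 < δ ∧ δ ≤ 1/3 ∧ (n:ℝ)*δ ≤ 1/3 ∧ K*((n:ℝ)*δ)^2 ≤ δ/2 := by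
    have hnR : (0:ℝ) < (n:ℝ) := by linarith
    have hden : (0:ℝ) < (n:ℝ) * (2*K*(n:ℝ)+1) := by positivity
    have hKn1 : (1:ℝ) ≤ K * (n:ℝ) :=
      le_trans (by norm_num) (mul_le_mul hK1 hcn zero_le_one hK0.le)
    refine ⟨1 / ((n:ℝ) * (2*K*(n:ℝ)+1)), by positivity, ?_, ?_, ?_⟩
    · rw [div_le_div_iff₀ hden (by norm_num)]
      nlinarith [mul_nonneg (sub_nonneg.mpr hK1) (sq_nonneg (n:ℝ)), sq_nonneg ((n:ℝ)-1)]
    · have e : (n:ℝ) * (1 / ((n:ℝ) * (2*K*(n:ℝ)+1))) = 1/(2*K*(n:ℝ)+1) := by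
        field_simp
      rw [e, div_le_div_iff₀ (by nlinarith) (by norm_num)]
      nlinarith
    · have e : (n:ℝ) * (1 / ((n:ℝ) * (2*K*(n:ℝ)+1))) = 1/(2*K*(n:ℝ)+1) := by
        field_simp
      rw [e]
      have e2 : K * (1/(2*K*(n:ℝ)+1))^2 = K / (2*K*(n:ℝ)+1)^2 := by
        rw [div_pow, one_pow]
        ring
      rw [e2, div_div, div_le_div_iff₀ (by positivity) (by positivity)]
      nlinarith [mul_pos hK0 hnR]
  obtain ⟨cc, hcc⟩ : ∃ cc : ℕ → ℝ, ∀ i, cc i = 1 + ((n - 1 - i : ℕ) : ℝ) * δ :=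
    ⟨_, fun i => rfl⟩
  obtain ⟨pv, hpv⟩ : ∃ pv : ℕ → ℝ, ∀ i,
      pv i = ((cc i) ^ (-(p+1)) + (p+1) * (cc i) ^ (-(1/(p+1)))) / (p+2) :=
    ⟨_, fun i => rfl⟩
  have hccpos : ∀ i, 0 < cc i := by
    intro i
    have h0 : (0:ℝ) ≤ ((n - 1 - i : ℕ) : ℝ) * δ := mul_nonneg (Nat.cast_nonneg _) hδ0.le
    rw [hcc i]
    linarith
  refine ⟨2 - δ/2, by linarith, ?_⟩
  intro x hx
  have hg : ∀ i, i + 1 < d → 0 < x (i+1) - x i := fun i h => sub_pos.2 (hx i h)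
  obtain ⟨a, ha⟩ : ∃ a : ℕ → ℝ, ∀ j, a j = 1 / (x (j+1) - x j) ^ (p+2) :=
    ⟨_, fun j => rfl⟩
  rw [hd1, hn]
  have step1 : ∑ i ∈ Finset.range n,
      (1 / ((x (i + 2) - x (i + 1)) * (x (i + 1) - x i) ^ (p + 1))
        + 1 / ((x (i + 2) - x (i + 1)) ^ (p + 1) * (x (i + 1) - x i)))
      ≤ ∑ i ∈ Finset.range n, (cc i * a i + pv i * a (i+1)) := by
    apply Finset.sum_le_sum
    intro i hi
    have hi' : i < n := Finset.mem_range.mp hi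
    have hV : 0 < x (i+1) - x i := hg i (by omega)
    have hW : 0 < x (i+1+1) - x (i+1) := hg (i+1) (by omega)
    have key := young_pair_aux p (cc i) ((x (i+1) - x i)⁻¹) ((x (i+1+1) - x (i+1))⁻¹)
      hp (hccpos i) (inv_pos.2 hV) (inv_pos.2 hW)
    have e1 : 1 / ((x (i+2) - x (i+1)) * (x (i+1) - x i) ^ (p+1))
        = (x (i+1+1) - x (i+1))⁻¹ * ((x (i+1) - x i)⁻¹) ^ (p+1) := by
      rw [Real.inv_rpow hV.le, one_div, mul_inv]
    have e2 : 1 / ((x (i+2) - x (i+1)) ^ (p+1) * (x (i+1) - x i))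
        = ((x (i+1+1) - x (i+1))⁻¹) ^ (p+1) * (x (i+1) - x i)⁻¹ := by
      rw [Real.inv_rpow hW.le, one_div, mul_inv]
    have e3 : a i = ((x (i+1) - x i)⁻¹) ^ (p+2) := by
      rw [ha i, Real.inv_rpow hV.le, one_div]
    have e4 : a (i+1) = ((x (i+1+1) - x (i+1))⁻¹) ^ (p+2) := by
      rw [ha (i+1), Real.inv_rpow hW.le, one_div]
    rw [e1, e2, e3, e4, hpv i]
    exact key
  have E1 : ∑ j ∈ Finset.range (n+1), (if j < n then cc j else 0) * a j
      = ∑ i ∈ Finset.range n, cc i * a i := by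
    rw [Finset.sum_range_succ, if_neg (lt_irrefl n), zero_mul, add_zero]
    exact Finset.sum_congr rfl fun i hi => by rw [if_pos (Finset.mem_range.mp hi)]
  have E2 : ∑ j ∈ Finset.range (n+1), (if j = 0 then 0 else pv (j-1)) * a j
      = ∑ i ∈ Finset.range n, pv i * a (i+1) := by
    rw [Finset.sum_range_succ']
    simp [Nat.succ_ne_zero]
  have step2 : ∑ i ∈ Finset.range n, (cc i * a i + pv i * a (i+1))
      = ∑ j ∈ Finset.range (n+1),
          ((if j < n then cc j else 0) + (if j = 0 then 0 else pv (j-1))) * a j := by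
    rw [Finset.sum_add_distrib, ← E1, ← E2, ← Finset.sum_add_distrib]
    exact Finset.sum_congr rfl fun j hj => by ring
  have step3 : ∑ j ∈ Finset.range (n+1),
      ((if j < n then cc j else 0) + (if j = 0 then 0 else pv (j-1))) * a j
      ≤ ∑ j ∈ Finset.range (n+1), (2 - δ/2) * a j := by
    apply Finset.sum_le_sum
    intro j hj
    have hj' : j < n + 1 := Finset.mem_range.mp hj
    have hgj : 0 < x (j+1) - x j := hg j (by omega)
    have haj : 0 ≤ a j := by
      rw [ha j]
      positivity
    apply mul_le_mul_of_nonneg_right _ haj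
    -- coefficient bound
    by_cases hj0 : j = 0
    · subst hj0
      rw [if_pos (by omega : 0 < n), if_pos rfl, add_zero]
      have hcast : ((n - 1 - 0 : ℕ) : ℝ) ≤ (n:ℝ) := Nat.cast_le.mpr (by omega)
      have hle : cc 0 ≤ 1 + (n:ℝ)*δ := by
        rw [hcc 0]
        nlinarith
      linarith
    · by_cases hjn : j = n
      · rw [hjn]
        rw [if_neg (lt_irrefl n), if_neg (by omega : ¬ n = 0), zero_add]
        have hccn : cc (n-1) = 1 := by
          rw [hcc (n-1)]
          have e0 : (n - 1 - (n - 1) : ℕ) = 0 := by omega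
          rw [e0]
          norm_num
        have hpv1 : pv (n-1) = 1 := by
          rw [hpv (n-1), hccn, Real.one_rpow, Real.one_rpow]
          field_simp
          ring
        rw [hpv1]
        linarith
      · have hj1 : 1 ≤ j := by omega
        have hjn' : j < n := by omega
        rw [if_pos hjn', if_neg hj0]
        have hcast1 : (n - 1 - (j-1) : ℕ) = n - j := by omega
        have hccj1 : cc (j-1) = 1 + ((n - j : ℕ) : ℝ) * δ := by
          rw [hcc (j-1), hcast1]
        have hcast2 : ((n - 1 - j : ℕ) : ℝ) = ((n - j : ℕ) : ℝ) - 1 := by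
          have h : (n - 1 - j : ℕ) + 1 = n - j := by omega
          rw [← h]
          push_cast
          ring
        have hccj : cc j = 1 + ((n - j : ℕ) : ℝ) * δ - δ := by
          rw [hcc j, hcast2]
          ring
        have hy0 : (0:ℝ) ≤ ((n - j : ℕ) : ℝ) * δ := mul_nonneg (Nat.cast_nonneg _) hδ0.le
        have hynδ : ((n - j : ℕ) : ℝ) * δ ≤ (n:ℝ) * δ := by
          have h' : ((n - j : ℕ) : ℝ) ≤ (n:ℝ) := Nat.cast_le.mpr (by omega)
          exact mul_le_mul_of_nonneg_right h' hδ0.le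
        have hy1 : ((n - j : ℕ) : ℝ) * δ ≤ 1 := by linarith
        have hφ : pv (j-1) ≤ 1 - ((n - j : ℕ) : ℝ) * δ + K * (((n - j : ℕ) : ℝ) * δ)^2 := by
          have hq := phi_quad_aux p (((n - j : ℕ) : ℝ) * δ) hp hy0 hy1
          rw [hpv (j-1), hccj1, hK]
          exact hq
        have hKy : K * (((n - j : ℕ) : ℝ) * δ)^2 ≤ δ/2 := by
          have hsq : (((n - j : ℕ) : ℝ) * δ)^2 ≤ ((n:ℝ)*δ)^2 := pow_le_pow_left₀ hy0 hynδ 2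
          have := mul_le_mul_of_nonneg_left hsq hK0.le
          linarith
        rw [hccj]
        linarith
  have final : ∑ j ∈ Finset.range (n+1), (2 - δ/2) * a j
      = (2 - δ/2) * ∑ j ∈ Finset.range (n+1), (1 / (x (j+1) - x j) ^ (p+2)) := by
    rw [Finset.mul_sum]
    exact Finset.sum_congr rfl fun j hj => by rw [ha j]
  calc ∑ i ∈ Finset.range n,
      (1 / ((x (i + 2) - x (i + 1)) * (x (i + 1) - x i) ^ (p + 1))
        + 1 / ((x (i + 2) - x (i + 1)) ^ (p + 1) * (x (i + 1) - x i)))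
      ≤ ∑ i ∈ Finset.range n, (cc i * a i + pv i * a (i+1)) := step1
    _ = ∑ j ∈ Finset.range (n+1),
          ((if j < n then cc j else 0) + (if j = 0 then 0 else pv (j-1))) * a j := step2
    _ ≤ ∑ j ∈ Finset.range (n+1), (2 - δ/2) * a j := step3
    _ = (2 - δ/2) * ∑ j ∈ Finset.range (n+1), (1 / (x (j+1) - x j) ^ (p+2)) := final
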